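/- Let F² = x₃ y₁ √(y₂² + y₃²) on the region x₃ y₁ > 0, y₂² + y₃² > 0 of ℝ³ × ℝ³. Then the spray coefficients Gⁱ = (1/4) gⁱˡ(∂²F²/∂yˡ∂xᵐ yᵐ - ∂F²/∂xˡ), where g_{ij} = (1/2)∂²F²/∂yⁱ∂yʲ, yield nonlinear connection coefficients Γⁱⱼ = ∂Gⁱ/∂yʲ whose only nonvanishing components are Γ²₂ = y₃/x₃, Γ²₃ = y₂/x₃, Γ³₂ = -y₂/x₃, Γ³₃ = y₃/x₃. -/

import Mathlib

noncomputable section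

/-- The energy function F² = x₃ y₁ √(y₂² + y₃²) on ℝ³ × ℝ³ (0-based indices). -/
def F2 (p : (Fin 3 → ℝ) × (Fin 3 → ℝ)) : ℝ :=
  p.1 2 * p.2 0 * Real.sqrt ((p.2 1) ^ 2 + (p.2 2) ^ 2)

/-- Partial derivative in the base (x) direction m. -/
def pdx (m : Fin 3) (f : (Fin 3 → ℝ) × (Fin 3 → ℝ) → ℝ)
    (p : (Fin 3 → ℝ) × (Fin 3 → ℝ)) : ℝ :=
  fderiv ℝ f p (Pi.single m 1, 0)

/-- Partial derivative in the fibre (y) direction l. -/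
def pdy (l : Fin 3) (f : (Fin 3 → ℝ) × (Fin 3 → ℝ) → ℝ)
    (p : (Fin 3 → ℝ) × (Fin 3 → ℝ)) : ℝ :=
  fderiv ℝ f p (0, Pi.single l 1)

/-- The Finsler metric tensor g_{ij} = (1/2) ∂²F²/∂yⁱ∂yʲ. -/
def gMat (p : (Fin 3 → ℝ) × (Fin 3 → ℝ)) : Matrix (Fin 3) (Fin 3) ℝ :=
  Matrix.of fun i j => (1 / 2) * pdy i (pdy j F2) p

/-- The spray coefficients Gⁱ = (1/4) gⁱˡ (∂²F²/∂yˡ∂xᵐ yᵐ - ∂F²/∂xˡ). -/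
def sprayG (i : Fin 3) (p : (Fin 3 → ℝ) × (Fin 3 → ℝ)) : ℝ :=
  (1 / 4) * ∑ l, (gMat p)⁻¹ i l *
    ((∑ m, pdx m (pdy l F2) p * p.2 m) - pdx l F2 p)

/-- The Barthel (nonlinear) connection coefficients Γⁱⱼ = ∂Gⁱ/∂yʲ. -/
def Gamma (i j : Fin 3) (p : (Fin 3 → ℝ) × (Fin 3 → ℝ)) : ℝ :=
  pdy j (sprayG i) p

namespace S8
abbrev E := (Fin 3 → ℝ) × (Fin 3 → ℝ)

def Cx (m : Fin 3) : E →L[ℝ] ℝ :=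
  (ContinuousLinearMap.proj m).comp (ContinuousLinearMap.fst ℝ (Fin 3 → ℝ) (Fin 3 → ℝ))
def Cy (m : Fin 3) : E →L[ℝ] ℝ :=
  (ContinuousLinearMap.proj m).comp (ContinuousLinearMap.snd ℝ (Fin 3 → ℝ) (Fin 3 → ℝ))

lemma hasX (m : Fin 3) (q : E) : HasFDerivAt (fun q : E => q.1 m) (Cx m) q :=
  (Cx m).hasFDerivAt
lemma hasY (m : Fin 3) (q : E) : HasFDerivAt (fun q : E => q.2 m) (Cy m) q :=
  (Cy m).hasFDerivAt

@[simp] lemma Cx_apply (m : Fin 3) (v : E) : Cx m v = v.1 m := rfl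
@[simp] lemma Cy_apply (m : Fin 3) (v : E) : Cy m v = v.2 m := rfl

def rr (q : E) : ℝ := Real.sqrt ((q.2 1)^2 + (q.2 2)^2)

lemma hasRho (q : E) : HasFDerivAt (fun q : E => (q.2 1)^2 + (q.2 2)^2)
    ((2 * q.2 1) • Cy 1 + (2 * q.2 2) • Cy 2) q := by
  have h := ((hasY 1 q).mul (hasY 1 q)).add ((hasY 2 q).mul (hasY 2 q))
  have e : (2 * q.2 1) • Cy 1 + (2 * q.2 2) • Cy 2
      = q.2 1 • Cy 1 + q.2 1 • Cy 1 + (q.2 2 • Cy 2 + q.2 2 • Cy 2) := by module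
  rw [e]; simpa only [pow_two, Pi.mul_def, Pi.add_def] using h

lemma hasRr {q : E} (h : 0 < (q.2 1)^2 + (q.2 2)^2) :
    HasFDerivAt rr ((1 / (2 * rr q)) • ((2 * q.2 1) • Cy 1 + (2 * q.2 2) • Cy 2)) q :=
  (Real.hasDerivAt_sqrt h.ne').comp_hasFDerivAt q (hasRho q)

lemma rr_pos {q : E} (h : 0 < (q.2 1)^2 + (q.2 2)^2) : 0 < rr q := Real.sqrt_pos.2 h
lemma rr_sq {q : E} (h : 0 < (q.2 1)^2 + (q.2 2)^2) :
    rr q ^ 2 = (q.2 1)^2 + (q.2 2)^2 := Real.sq_sqrt h.le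

lemma hasRrInv {q : E} (h : 0 < (q.2 1)^2 + (q.2 2)^2) :
    HasFDerivAt (fun q => (rr q)⁻¹)
      ((-(rr q ^ 2)⁻¹) • ((1 / (2 * rr q)) • ((2 * q.2 1) • Cy 1 + (2 * q.2 2) • Cy 2))) q :=
  (hasDerivAt_inv (rr_pos h).ne').comp_hasFDerivAt q (hasRr h)

lemma hasF2 {q : E} (h : 0 < (q.2 1)^2 + (q.2 2)^2) :
    HasFDerivAt F2
      ((q.1 2 * q.2 0) • ((1 / (2 * rr q)) • ((2 * q.2 1) • Cy 1 + (2 * q.2 2) • Cy 2))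
        + rr q • (q.1 2 • Cy 0 + q.2 0 • Cx 2)) q :=
  ((hasX 2 q).mul (hasY 0 q)).mul (hasRr h)

-- value lemmas for first derivatives of F2
lemma pdyF2 {q : E} (h : 0 < (q.2 1)^2 + (q.2 2)^2) (l : Fin 3) :
    pdy l F2 q = ![q.1 2 * rr q,
      q.1 2 * q.2 0 * q.2 1 / rr q,
      q.1 2 * q.2 0 * q.2 2 / rr q] l := by
  have hr := (rr_pos h).ne'
  rw [pdy, (hasF2 h).fderiv]
  fin_cases l <;> simp [Pi.single_apply] <;>
    first
      | rfl
      | (field_simp; ring)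
      | ring

lemma pdxF2 {q : E} (h : 0 < (q.2 1)^2 + (q.2 2)^2) (m : Fin 3) :
    pdx m F2 q = ![0, 0, q.2 0 * rr q] m := by
  rw [pdx, (hasF2 h).fderiv]
  fin_cases m <;> simp [Pi.single_apply, mul_comm]


def fy0 (q : E) : ℝ := q.1 2 * rr q
def fy1 (q : E) : ℝ := q.1 2 * q.2 0 * q.2 1 / rr q
def fy2 (q : E) : ℝ := q.1 2 * q.2 0 * q.2 2 / rr q

lemma hasFy0 {q : E} (h : 0 < (q.2 1)^2 + (q.2 2)^2) :
    HasFDerivAt fy0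
      (q.1 2 • ((1 / (2 * rr q)) • ((2 * q.2 1) • Cy 1 + (2 * q.2 2) • Cy 2)) + rr q • Cx 2) q :=
  (hasX 2 q).mul (hasRr h)

lemma hasFy1 {q : E} (h : 0 < (q.2 1)^2 + (q.2 2)^2) :
    HasFDerivAt fy1
      ((q.1 2 * q.2 0 * q.2 1) •
          ((-(rr q ^ 2)⁻¹) • ((1 / (2 * rr q)) • ((2 * q.2 1) • Cy 1 + (2 * q.2 2) • Cy 2)))
        + (rr q)⁻¹ • ((q.1 2 * q.2 0) • Cy 1 + q.2 1 • (q.1 2 • Cy 0 + q.2 0 • Cx 2))) q := by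
  have := (((hasX 2 q).mul (hasY 0 q)).mul (hasY 1 q)).mul (hasRrInv h)
  have e : fy1 = fun q : E => q.1 2 * q.2 0 * q.2 1 * (rr q)⁻¹ := funext fun q => div_eq_mul_inv _ _
  rw [e]; simpa only [fy1, div_eq_mul_inv, Pi.mul_def] using this

lemma hasFy2 {q : E} (h : 0 < (q.2 1)^2 + (q.2 2)^2) :
    HasFDerivAt fy2
      ((q.1 2 * q.2 0 * q.2 2) •
          ((-(rr q ^ 2)⁻¹) • ((1 / (2 * rr q)) • ((2 * q.2 1) • Cy 1 + (2 * q.2 2) • Cy 2)))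
        + (rr q)⁻¹ • ((q.1 2 * q.2 0) • Cy 2 + q.2 2 • (q.1 2 • Cy 0 + q.2 0 • Cx 2))) q := by
  have := (((hasX 2 q).mul (hasY 0 q)).mul (hasY 2 q)).mul (hasRrInv h)
  have e : fy2 = fun q : E => q.1 2 * q.2 0 * q.2 2 * (rr q)⁻¹ := funext fun q => div_eq_mul_inv _ _
  rw [e]; simpa only [fy2, div_eq_mul_inv, Pi.mul_def] using this

lemma pdy_fy0 {q : E} (h : 0 < (q.2 1)^2 + (q.2 2)^2) (i : Fin 3) :
    pdy i fy0 q = ![0, q.1 2 * q.2 1 / rr q, q.1 2 * q.2 2 / rr q] i := by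
  have hr := (rr_pos h).ne'
  rw [pdy, (hasFy0 h).fderiv]
  fin_cases i <;> simp [Pi.single_apply] <;>
    first | rfl | (field_simp; ring) | ring | skip

lemma pdx_fy0 {q : E} (h : 0 < (q.2 1)^2 + (q.2 2)^2) (m : Fin 3) :
    pdx m fy0 q = ![0, 0, rr q] m := by
  rw [pdx, (hasFy0 h).fderiv]
  fin_cases m <;> simp [Pi.single_apply]

lemma pdy_fy1 {q : E} (h : 0 < (q.2 1)^2 + (q.2 2)^2) (i : Fin 3) :
    pdy i fy1 q = ![q.1 2 * q.2 1 / rr q,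
      q.1 2 * q.2 0 * (q.2 2)^2 / rr q ^ 3,
      -(q.1 2 * q.2 0 * q.2 1 * q.2 2) / rr q ^ 3] i := by
  have hr := (rr_pos h).ne'
  have hr2 := rr_sq h
  rw [pdy, (hasFy1 h).fderiv]
  fin_cases i
  · simp [Pi.single_apply]; field_simp
  · simp [Pi.single_apply]; field_simp
    linear_combination (q.1 2 * q.2 0) * hr2
  · simp [Pi.single_apply]; field_simp

lemma pdx_fy1 {q : E} (h : 0 < (q.2 1)^2 + (q.2 2)^2) (m : Fin 3) :
    pdx m fy1 q = ![0, 0, q.2 0 * q.2 1 / rr q] m := by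
  have hr := (rr_pos h).ne'
  rw [pdx, (hasFy1 h).fderiv]
  fin_cases m <;> simp [Pi.single_apply] <;>
    first | rfl | (field_simp; ring) | ring | skip

lemma pdy_fy2 {q : E} (h : 0 < (q.2 1)^2 + (q.2 2)^2) (i : Fin 3) :
    pdy i fy2 q = ![q.1 2 * q.2 2 / rr q,
      -(q.1 2 * q.2 0 * q.2 1 * q.2 2) / rr q ^ 3,
      q.1 2 * q.2 0 * (q.2 1)^2 / rr q ^ 3] i := by
  have hr := (rr_pos h).ne'
  have hr2 := rr_sq h
  rw [pdy, (hasFy2 h).fderiv]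
  fin_cases i
  · simp [Pi.single_apply]; field_simp
  · simp [Pi.single_apply]; field_simp
  · simp [Pi.single_apply]; field_simp
    linear_combination (q.1 2 * q.2 0) * hr2

lemma pdx_fy2 {q : E} (h : 0 < (q.2 1)^2 + (q.2 2)^2) (m : Fin 3) :
    pdx m fy2 q = ![0, 0, q.2 0 * q.2 2 / rr q] m := by
  have hr := (rr_pos h).ne'
  rw [pdx, (hasFy2 h).fderiv]
  fin_cases m <;> simp [Pi.single_apply] <;>
    first | rfl | (field_simp; ring) | ring | skip


lemma isOpenV : IsOpen {q : E | 0 < (q.2 1)^2 + (q.2 2)^2} := by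
  have hc : Continuous fun q : E => (q.2 1)^2 + (q.2 2)^2 := by fun_prop
  exact isOpen_lt continuous_const hc

lemma ev_rho {q : E} (h : 0 < (q.2 1)^2 + (q.2 2)^2) :
    ∀ᶠ q' in nhds q, 0 < (q'.2 1)^2 + (q'.2 2)^2 :=
  Filter.eventually_of_mem (isOpenV.mem_nhds h) (fun _ hx => hx)

lemma pdyF2_ev0 {q : E} (h : 0 < (q.2 1)^2 + (q.2 2)^2) : pdy 0 F2 =ᶠ[nhds q] fy0 := by
  filter_upwards [ev_rho h] with q' hq' using by simpa [fy0] using pdyF2 hq' 0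
lemma pdyF2_ev1 {q : E} (h : 0 < (q.2 1)^2 + (q.2 2)^2) : pdy 1 F2 =ᶠ[nhds q] fy1 := by
  filter_upwards [ev_rho h] with q' hq' using by simpa [fy1] using pdyF2 hq' 1
lemma pdyF2_ev2 {q : E} (h : 0 < (q.2 1)^2 + (q.2 2)^2) : pdy 2 F2 =ᶠ[nhds q] fy2 := by
  filter_upwards [ev_rho h] with q' hq' using by simpa [fy2] using pdyF2 hq' 2

lemma pdypdyF2_0 {q : E} (h : 0 < (q.2 1)^2 + (q.2 2)^2) (i : Fin 3) :
    pdy i (pdy 0 F2) q = pdy i fy0 q := by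
  have e : pdy i (pdy 0 F2) q = fderiv ℝ (pdy 0 F2) q (0, Pi.single i 1) := rfl
  rw [e, (pdyF2_ev0 h).fderiv_eq]; rfl
lemma pdypdyF2_1 {q : E} (h : 0 < (q.2 1)^2 + (q.2 2)^2) (i : Fin 3) :
    pdy i (pdy 1 F2) q = pdy i fy1 q := by
  have e : pdy i (pdy 1 F2) q = fderiv ℝ (pdy 1 F2) q (0, Pi.single i 1) := rfl
  rw [e, (pdyF2_ev1 h).fderiv_eq]; rfl
lemma pdypdyF2_2 {q : E} (h : 0 < (q.2 1)^2 + (q.2 2)^2) (i : Fin 3) :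
    pdy i (pdy 2 F2) q = pdy i fy2 q := by
  have e : pdy i (pdy 2 F2) q = fderiv ℝ (pdy 2 F2) q (0, Pi.single i 1) := rfl
  rw [e, (pdyF2_ev2 h).fderiv_eq]; rfl

lemma pdxpdyF2_0 {q : E} (h : 0 < (q.2 1)^2 + (q.2 2)^2) (m : Fin 3) :
    pdx m (pdy 0 F2) q = pdx m fy0 q := by
  have e : pdx m (pdy 0 F2) q = fderiv ℝ (pdy 0 F2) q (Pi.single m 1, 0) := rfl
  rw [e, (pdyF2_ev0 h).fderiv_eq]; rfl
lemma pdxpdyF2_1 {q : E} (h : 0 < (q.2 1)^2 + (q.2 2)^2) (m : Fin 3) :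
    pdx m (pdy 1 F2) q = pdx m fy1 q := by
  have e : pdx m (pdy 1 F2) q = fderiv ℝ (pdy 1 F2) q (Pi.single m 1, 0) := rfl
  rw [e, (pdyF2_ev1 h).fderiv_eq]; rfl
lemma pdxpdyF2_2 {q : E} (h : 0 < (q.2 1)^2 + (q.2 2)^2) (m : Fin 3) :
    pdx m (pdy 2 F2) q = pdx m fy2 q := by
  have e : pdx m (pdy 2 F2) q = fderiv ℝ (pdy 2 F2) q (Pi.single m 1, 0) := rfl
  rw [e, (pdyF2_ev2 h).fderiv_eq]; rfl

def Gm (q : E) : Matrix (Fin 3) (Fin 3) ℝ :=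
  !![0, q.1 2 * q.2 1 / rr q / 2, q.1 2 * q.2 2 / rr q / 2;
     q.1 2 * q.2 1 / rr q / 2, q.1 2 * q.2 0 * (q.2 2)^2 / rr q ^ 3 / 2,
       -(q.1 2 * q.2 0 * q.2 1 * q.2 2) / rr q ^ 3 / 2;
     q.1 2 * q.2 2 / rr q / 2, -(q.1 2 * q.2 0 * q.2 1 * q.2 2) / rr q ^ 3 / 2,
       q.1 2 * q.2 0 * (q.2 1)^2 / rr q ^ 3 / 2]

lemma col0 {q : E} (h : 0 < (q.2 1)^2 + (q.2 2)^2) (i : Fin 3) :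
    (1:ℝ)/2 * pdy i (pdy 0 F2) q = Gm q i 0 := by
  rw [pdypdyF2_0 h i, pdy_fy0 h i]
  fin_cases i <;> simp [Gm] <;> ring
lemma col1 {q : E} (h : 0 < (q.2 1)^2 + (q.2 2)^2) (i : Fin 3) :
    (1:ℝ)/2 * pdy i (pdy 1 F2) q = Gm q i 1 := by
  rw [pdypdyF2_1 h i, pdy_fy1 h i]
  fin_cases i <;> simp [Gm] <;> ring
lemma col2 {q : E} (h : 0 < (q.2 1)^2 + (q.2 2)^2) (i : Fin 3) :
    (1:ℝ)/2 * pdy i (pdy 2 F2) q = Gm q i 2 := by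
  rw [pdypdyF2_2 h i, pdy_fy2 h i]
  fin_cases i <;> simp [Gm] <;> ring

lemma gMat_eq {q : E} (h : 0 < (q.2 1)^2 + (q.2 2)^2) : gMat q = Gm q := by
  ext i j
  fin_cases j
  · exact col0 h i
  · exact col1 h i
  · exact col2 h i


def Bm (q : E) : Matrix (Fin 3) (Fin 3) ℝ :=
  !![0, 2 * q.2 1 / (q.1 2 * rr q), 2 * q.2 2 / (q.1 2 * rr q);
     2 * q.2 1 / (q.1 2 * rr q), 2 * (q.2 2)^2 / (q.1 2 * q.2 0 * rr q),
       -(2 * q.2 1 * q.2 2) / (q.1 2 * q.2 0 * rr q);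
     2 * q.2 2 / (q.1 2 * rr q), -(2 * q.2 1 * q.2 2) / (q.1 2 * q.2 0 * rr q),
       2 * (q.2 1)^2 / (q.1 2 * q.2 0 * rr q)]

set_option maxHeartbeats 2000000 in
lemma gInv_eq {q : E} (h : 0 < (q.2 1)^2 + (q.2 2)^2)
    (ha : q.1 2 ≠ 0) (hb : q.2 0 ≠ 0) : (gMat q)⁻¹ = Bm q := by
  rw [gMat_eq h]
  apply Matrix.inv_eq_right_inv
  have hr := (rr_pos h).ne'
  have hr2 := rr_sq h
  ext i j
  fin_cases i <;> fin_cases j <;>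
    simp [Gm, Bm, Matrix.mul_apply, Fin.sum_univ_three, Matrix.one_apply] <;>
    field_simp <;>
    first
    | ring1
    | linear_combination (-(2 * q.1 2)) * hr2
    | linear_combination (-(8 * q.1 2 ^ 3 * q.2 0 ^ 2 * rr q ^ 6 * (rr q ^ 2 + q.2 2 ^ 2))) * hr2
    | linear_combination (-(8 * q.1 2 ^ 3 * q.2 0 ^ 2 * rr q ^ 6 * (rr q ^ 2 + q.2 1 ^ 2))) * hr2
    | linear_combination (8 * q.1 2 ^ 3 * q.2 0 ^ 2 * q.2 1 * q.2 2 * rr q ^ 6) * hr2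
    | linear_combination (-(2 * q.1 2 * q.2 0)) * hr2
    | linear_combination (2 * q.1 2) * hr2
    | linear_combination (2 * q.1 2 * q.2 0) * hr2
    | linear_combination (-1 : ℝ) * hr2
    | linear_combination (-(rr q ^ 2 + q.2 2 ^ 2)) * hr2
    | linear_combination (-(rr q ^ 2 + q.2 1 ^ 2)) * hr2
    | linear_combination (q.2 1 * q.2 2) * hr2


lemma Hterm0 {q : E} (h : 0 < (q.2 1)^2 + (q.2 2)^2) :
    (∑ m, pdx m (pdy 0 F2) q * q.2 m) - pdx 0 F2 q = q.2 2 * rr q := by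
  rw [Fin.sum_univ_three, pdxpdyF2_0 h 0, pdxpdyF2_0 h 1, pdxpdyF2_0 h 2,
    pdx_fy0 h 0, pdx_fy0 h 1, pdx_fy0 h 2, pdxF2 h 0]
  simp [mul_comm]

lemma Hterm1 {q : E} (h : 0 < (q.2 1)^2 + (q.2 2)^2) :
    (∑ m, pdx m (pdy 1 F2) q * q.2 m) - pdx 1 F2 q
      = q.2 0 * q.2 1 / rr q * q.2 2 := by
  rw [Fin.sum_univ_three, pdxpdyF2_1 h 0, pdxpdyF2_1 h 1, pdxpdyF2_1 h 2,
    pdx_fy1 h 0, pdx_fy1 h 1, pdx_fy1 h 2, pdxF2 h 1]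
  simp

lemma Hterm2 {q : E} (h : 0 < (q.2 1)^2 + (q.2 2)^2) :
    (∑ m, pdx m (pdy 2 F2) q * q.2 m) - pdx 2 F2 q
      = q.2 0 * q.2 2 / rr q * q.2 2 - q.2 0 * rr q := by
  rw [Fin.sum_univ_three, pdxpdyF2_2 h 0, pdxpdyF2_2 h 1, pdxpdyF2_2 h 2,
    pdx_fy2 h 0, pdx_fy2 h 1, pdx_fy2 h 2, pdxF2 h 2]
  simp

lemma spray0 {q : E} (h : 0 < (q.2 1)^2 + (q.2 2)^2)
    (ha : q.1 2 ≠ 0) (hb : q.2 0 ≠ 0) : sprayG 0 q = 0 := by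
  have e : sprayG 0 q = (1/4) * ∑ l, (gMat q)⁻¹ 0 l *
      ((∑ m, pdx m (pdy l F2) q * q.2 m) - pdx l F2 q) := rfl
  rw [e, Fin.sum_univ_three, Hterm0 h, Hterm1 h, Hterm2 h, gInv_eq h ha hb]
  have hr := (rr_pos h).ne'
  have hr2 := rr_sq h
  simp [Bm]
  field_simp
  linear_combination (-(2 * q.2 0 * q.2 2)) * hr2

lemma spray1 {q : E} (h : 0 < (q.2 1)^2 + (q.2 2)^2)
    (ha : q.1 2 ≠ 0) (hb : q.2 0 ≠ 0) :
    sprayG 1 q = q.2 1 * q.2 2 / q.1 2 := by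
  have e : sprayG 1 q = (1/4) * ∑ l, (gMat q)⁻¹ 1 l *
      ((∑ m, pdx m (pdy l F2) q * q.2 m) - pdx l F2 q) := rfl
  rw [e, Fin.sum_univ_three, Hterm0 h, Hterm1 h, Hterm2 h, gInv_eq h ha hb]
  have hr := (rr_pos h).ne'
  have hr2 := rr_sq h
  simp [Bm]
  field_simp
  first
  | ring1
  | linear_combination (q.1 2 * q.2 0 * q.2 1 * q.2 2 * rr q) * hr2
  | linear_combination (2 * q.1 2 * q.2 0 * q.2 1 * q.2 2 * rr q) * hr2
  | linear_combination (4 * q.1 2 * q.2 0 * q.2 1 * q.2 2 * rr q) * hr2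

lemma spray2 {q : E} (h : 0 < (q.2 1)^2 + (q.2 2)^2)
    (ha : q.1 2 ≠ 0) (hb : q.2 0 ≠ 0) :
    sprayG 2 q = (q.2 2 * q.2 2 - q.2 1 * q.2 1) / (2 * q.1 2) := by
  have e : sprayG 2 q = (1/4) * ∑ l, (gMat q)⁻¹ 2 l *
      ((∑ m, pdx m (pdy l F2) q * q.2 m) - pdx l F2 q) := rfl
  rw [e, Fin.sum_univ_three, Hterm0 h, Hterm1 h, Hterm2 h, gInv_eq h ha hb]
  have hr := (rr_pos h).ne'
  have hr2 := rr_sq h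
  simp [Bm]
  field_simp
  first
  | ring1
  | linear_combination (q.1 2 * q.2 0 * rr q) * hr2
  | linear_combination (2 * q.1 2 * q.2 0 * rr q) * hr2
  | linear_combination (-(q.1 2 * q.2 0 * rr q)) * hr2
  | linear_combination (q.1 2 * q.2 0 * q.2 1 ^ 2 * rr q) * hr2
  | linear_combination (q.1 2 * q.2 0 * q.2 2 ^ 2 * rr q) * hr2


lemma evx {p : E} (ha : p.1 2 ≠ 0) : ∀ᶠ q : E in nhds p, q.1 2 ≠ 0 := by
  have hc : Continuous fun q : E => q.1 2 := by fun_prop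
  exact Filter.eventually_of_mem ((isOpen_compl_singleton.preimage hc).mem_nhds ha)
    fun _ hx => hx

lemma evy {p : E} (hb : p.2 0 ≠ 0) : ∀ᶠ q : E in nhds p, q.2 0 ≠ 0 := by
  have hc : Continuous fun q : E => q.2 0 := by fun_prop
  exact Filter.eventually_of_mem ((isOpen_compl_singleton.preimage hc).mem_nhds hb)
    fun _ hx => hx

lemma hasXInv {p : E} (ha : p.1 2 ≠ 0) :
    HasFDerivAt (fun q : E => (q.1 2)⁻¹) ((-(p.1 2 ^ 2)⁻¹) • Cx 2) p :=
  (hasDerivAt_inv ha).comp_hasFDerivAt p (hasX 2 p)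

lemma hasGf1 {p : E} (ha : p.1 2 ≠ 0) :
    HasFDerivAt (fun q : E => q.2 1 * q.2 2 / q.1 2)
      ((p.2 1 * p.2 2) • ((-(p.1 2 ^ 2)⁻¹) • Cx 2)
        + (p.1 2)⁻¹ • (p.2 1 • Cy 2 + p.2 2 • Cy 1)) p := by
  have := ((hasY 1 p).mul (hasY 2 p)).mul (hasXInv ha)
  simpa only [div_eq_mul_inv, Pi.mul_def] using this

lemma hasGf2 {p : E} (ha : p.1 2 ≠ 0) :
    HasFDerivAt (fun q : E => (q.2 2 * q.2 2 - q.2 1 * q.2 1) / (2 * q.1 2))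
      ((p.2 2 * p.2 2 - p.2 1 * p.2 1) •
          ((-((2 * p.1 2) ^ 2)⁻¹) • ((2:ℝ) • Cx 2))
        + (2 * p.1 2)⁻¹ • ((p.2 2 • Cy 2 + p.2 2 • Cy 2) - (p.2 1 • Cy 1 + p.2 1 • Cy 1))) p := by
  have h2a : 2 * p.1 2 ≠ 0 := by simpa using ha
  have hD : HasFDerivAt (fun q : E => 2 * q.1 2) ((2:ℝ) • Cx 2) p := by
    simpa using (hasX 2 p).const_mul (2:ℝ)
  have hDI := (hasDerivAt_inv h2a).comp_hasFDerivAt p hD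
  have hN := ((hasY 2 p).mul (hasY 2 p)).sub ((hasY 1 p).mul (hasY 1 p))
  have := hN.mul hDI
  simpa only [div_eq_mul_inv, Pi.mul_def, Pi.sub_def, Function.comp_def] using this

lemma Gamma0 {p : E} (h2 : 0 < (p.2 1)^2 + (p.2 2)^2)
    (ha : p.1 2 ≠ 0) (hb : p.2 0 ≠ 0) (j : Fin 3) : Gamma 0 j p = 0 := by
  have hev : sprayG 0 =ᶠ[nhds p] (fun _ => (0:ℝ)) := by
    filter_upwards [ev_rho h2, evx ha, evy hb] with q hq hqa hqb using spray0 hq hqa hqb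
  have e : Gamma 0 j p = fderiv ℝ (fun _ : E => (0:ℝ)) p (0, Pi.single j 1) := by
    show fderiv ℝ (sprayG 0) p (0, Pi.single j 1) = _
    rw [hev.fderiv_eq]
  rw [e]
  simp

lemma Gamma1 {p : E} (h2 : 0 < (p.2 1)^2 + (p.2 2)^2)
    (ha : p.1 2 ≠ 0) (hb : p.2 0 ≠ 0) (j : Fin 3) :
    Gamma 1 j p = ![0, p.2 2 / p.1 2, p.2 1 / p.1 2] j := by
  have hev : sprayG 1 =ᶠ[nhds p] (fun q : E => q.2 1 * q.2 2 / q.1 2) := by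
    filter_upwards [ev_rho h2, evx ha, evy hb] with q hq hqa hqb using spray1 hq hqa hqb
  have e : Gamma 1 j p = fderiv ℝ (fun q : E => q.2 1 * q.2 2 / q.1 2) p (0, Pi.single j 1) := by
    show fderiv ℝ (sprayG 1) p (0, Pi.single j 1) = _
    rw [hev.fderiv_eq]
  rw [e, (hasGf1 ha).fderiv]
  fin_cases j <;> simp [Pi.single_apply] <;> field_simp <;> ring

lemma Gamma2 {p : E} (h2 : 0 < (p.2 1)^2 + (p.2 2)^2)
    (ha : p.1 2 ≠ 0) (hb : p.2 0 ≠ 0) (j : Fin 3) :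
    Gamma 2 j p = ![0, -(p.2 1) / p.1 2, p.2 2 / p.1 2] j := by
  have hev : sprayG 2 =ᶠ[nhds p]
      (fun q : E => (q.2 2 * q.2 2 - q.2 1 * q.2 1) / (2 * q.1 2)) := by
    filter_upwards [ev_rho h2, evx ha, evy hb] with q hq hqa hqb using spray2 hq hqa hqb
  have e : Gamma 2 j p = fderiv ℝ
      (fun q : E => (q.2 2 * q.2 2 - q.2 1 * q.2 1) / (2 * q.1 2)) p (0, Pi.single j 1) := by
    show fderiv ℝ (sprayG 2) p (0, Pi.single j 1) = _
    rw [hev.fderiv_eq]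
  rw [e, (hasGf2 ha).fderiv]
  fin_cases j <;> simp [Pi.single_apply] <;> field_simp <;> ring

end S8

/-- the only nonvanishing Barthel connection coefficients of
F = √(x₃ y₁ √(y₂² + y₃²)) are Γ²₂ = y₃/x₃, Γ²₃ = y₂/x₃, Γ³₂ = -y₂/x₃,
Γ³₃ = y₃/x₃ (1-based indexing; below 0-based). -/
theorem stmt_8 (p : (Fin 3 → ℝ) × (Fin 3 → ℝ))
    (h1 : p.1 2 * p.2 0 > 0) (h2 : (p.2 1) ^ 2 + (p.2 2) ^ 2 > 0) :
    ∀ i j : Fin 3, Gamma i j p =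
      ![![0, 0, 0],
        ![0, p.2 2 / p.1 2, p.2 1 / p.1 2],
        ![0, -(p.2 1) / p.1 2, p.2 2 / p.1 2]] i j := by
  intro i j
  have ha : p.1 2 ≠ 0 := left_ne_zero_of_mul h1.ne'
  have hb : p.2 0 ≠ 0 := right_ne_zero_of_mul h1.ne'
  fin_cases i
  · have := S8.Gamma0 h2 ha hb j
    fin_cases j <;> simpa using this
  · have := S8.Gamma1 h2 ha hb j
    fin_cases j <;> simpa using this
  · have := S8.Gamma2 h2 ha hb j
    fin_cases j <;> simpa using this

end
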